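/- Let p be an odd prime, n a positive integer, g, f ∈ R = F_p[X]/(X^n+1), and let S = {(a·g, a·f) : a ∈ R}, regarded as a subspace of F_p^n × F_p^n. Then: (1) S is totally isotropic with respect to the symplectic inner product if and only if g(x)·f(x⁻¹) = f(x)·g(x⁻¹) in R; (2) an element (a,b) of F_p^n × F_p^n lies in S^⊥ if and only if a(x)·f(x⁻¹) = b(x)·g(x⁻¹) in R. -/

import Mathlib

open Polynomial

/-- The symplectic inner product on `F_p^n × F_p^n`. -/
def sympForm (p n : ℕ) (u v : (Fin n → ZMod p) × (Fin n → ZMod p)) : ZMod p :=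
  (∑ j, u.1 j * v.2 j) - (∑ j, u.2 j * v.1 j)

/-- The cyclotomic ring `R = F_p[X]/(X^n + 1)`. -/
abbrev Rpn (p n : ℕ) := Polynomial (ZMod p) ⧸ Ideal.span {(X : Polynomial (ZMod p)) ^ n + 1}

/-- The quotient map `F_p[X] → R`. -/
noncomputable def mkR (p n : ℕ) : Polynomial (ZMod p) →+* Rpn p n :=
  Ideal.Quotient.mk (Ideal.span {(X : Polynomial (ZMod p)) ^ n + 1})

/-- The polynomial `a_0 + a_1 X + ⋯ + a_{n−1} X^{n−1}` attached to a vector. -/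
noncomputable def toPoly (p n : ℕ) (a : Fin n → ZMod p) : Polynomial (ZMod p) :=
  ∑ j : Fin n, C (a j) * X ^ (j : ℕ)

/-- The identification `F_p^n → R`, `a ↦ a(x)`. -/
noncomputable def toR (p n : ℕ) (a : Fin n → ZMod p) : Rpn p n := mkR p n (toPoly p n a)

/-- `x⁻¹ = −x^{n−1}` in `R`, where `x` is the image of `X`. -/
noncomputable def xinv (p n : ℕ) : Rpn p n := -(mkR p n X) ^ (n - 1)

namespace Stmt5Aux

variable (p n : ℕ) [Fact p.Prime]

noncomputable def qp : Polynomial (ZMod p) := X ^ n + 1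

theorem qp_monic (hn : 0 < n) : (qp p n).Monic := by
  have : ((1 : Polynomial (ZMod p))).degree < (X ^ n : Polynomial (ZMod p)).degree := by
    simpa [degree_X_pow] using (by exact_mod_cast hn : (0 : WithBot ℕ) < (n : WithBot ℕ))
  simpa [qp] using (monic_X_pow n).add_of_left this

theorem qp_degree (hn : 0 < n) : (qp p n).degree = n := by
  simpa [qp] using degree_X_pow_add_C (R := ZMod p) hn (1 : ZMod p)

theorem mkR_eq (P : Polynomial (ZMod p)) : mkR p n P = AdjoinRoot.mk (qp p n) P := rfl

theorem mkR_qp : mkR p n (qp p n) = 0 := by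
  rw [mkR_eq]; exact AdjoinRoot.mk_self

/-- constant-coefficient functional (and general coefficients), as a linear map -/
noncomputable def eps (hn : 0 < n) : Rpn p n →ₗ[ZMod p] ZMod p :=
  (lcoeff (ZMod p) 0).comp (AdjoinRoot.modByMonicHom (qp_monic p n hn))

theorem eps_mk (hn : 0 < n) (P : Polynomial (ZMod p)) (hP : P.degree < n) :
    eps p n hn (mkR p n P) = P.coeff 0 := by
  rw [mkR_eq]
  show (P %ₘ qp p n).coeff 0 = P.coeff 0
  rw [(Polynomial.modByMonic_eq_self_iff (qp_monic p n hn)).2 (by rwa [qp_degree p n hn])]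

noncomputable def xx : Rpn p n := mkR p n X

theorem x_pow_n (hn : 0 < n) : (xx p n) ^ n = -1 := by
  have h := mkR_qp p n
  have : mkR p n (X ^ n + 1) = 0 := h
  rw [map_add, map_pow, map_one] at this
  have := eq_neg_of_add_eq_zero_left this
  simpa [xx] using this

theorem x_mul_xinv (hn : 0 < n) : xx p n * xinv p n = 1 := by
  have hxinv : xinv p n = -(xx p n ^ (n - 1)) := rfl
  have : xx p n * xinv p n = -(xx p n ^ 1 * xx p n ^ (n - 1)) := by rw [hxinv, pow_one]; ring
  rw [this, ← pow_add, Nat.add_sub_cancel' hn, x_pow_n p n hn, neg_neg]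

theorem x_pow_mul_xinv_pow (hn : 0 < n) (k : ℕ) : xx p n ^ k * xinv p n ^ k = 1 := by
  rw [← mul_pow, x_mul_xinv p n hn, one_pow]

theorem xinv_pow_n (hn : 0 < n) : xinv p n ^ n = -1 := by
  have h := x_pow_mul_xinv_pow p n hn n
  rw [x_pow_n p n hn] at h
  linear_combination -h

theorem xinv_pow_eq (hn : 0 < n) (m : ℕ) (hm : 0 < m) (hmn : m < n) :
    xinv p n ^ m = -(xx p n ^ (n - m)) := by
  have h1 : -(xx p n ^ (n - m)) * xx p n ^ m = 1 := by
    have h0 : xx p n ^ (n - m) * xx p n ^ m = xx p n ^ n := by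
      rw [← pow_add, Nat.sub_add_cancel hmn.le]
    rw [x_pow_n p n hn] at h0
    linear_combination -h0
  calc xinv p n ^ m = xinv p n ^ m * (-(xx p n ^ (n - m)) * xx p n ^ m) := by rw [h1, mul_one]
    _ = -(xx p n ^ (n - m)) * (xx p n ^ m * xinv p n ^ m) := by ring
    _ = -(xx p n ^ (n - m)) := by rw [x_pow_mul_xinv_pow p n hn, mul_one]

theorem eps_x_pow (hn : 0 < n) (m : ℕ) (hm : m < n) :
    eps p n hn (xx p n ^ m) = if m = 0 then 1 else 0 := by
  have : xx p n ^ m = mkR p n (X ^ m) := by rw [map_pow]; rfl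
  rw [this, eps_mk p n hn _ (by simpa [degree_X_pow] using (by exact_mod_cast hm : (m : WithBot ℕ) < n))]
  rw [coeff_X_pow]
  by_cases hm0 : m = 0
  · rw [if_pos hm0.symm, if_pos hm0]
  · rw [if_neg (by omega), if_neg hm0]

theorem eps_x_xinv (hn : 0 < n) (j k : Fin n) :
    eps p n hn (xx p n ^ (j : ℕ) * xinv p n ^ (k : ℕ)) = if (j : ℕ) = k then 1 else 0 := by
  rcases le_or_gt (k : ℕ) (j : ℕ) with h | h
  · have : xx p n ^ (j : ℕ) * xinv p n ^ (k : ℕ) = xx p n ^ ((j : ℕ) - k) := by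
      calc xx p n ^ (j : ℕ) * xinv p n ^ (k : ℕ)
          = xx p n ^ ((j : ℕ) - k) * (xx p n ^ (k : ℕ) * xinv p n ^ (k : ℕ)) := by
            rw [← mul_assoc, ← pow_add, Nat.sub_add_cancel h]
        _ = xx p n ^ ((j : ℕ) - k) := by rw [x_pow_mul_xinv_pow p n hn, mul_one]
    rw [this, eps_x_pow p n hn _ (lt_of_le_of_lt (Nat.sub_le _ _) j.isLt)]
    by_cases hj : (j : ℕ) = k
    · rw [if_pos (by omega), if_pos hj]
    · rw [if_neg (by omega), if_neg hj]
  · have h2 : xx p n ^ (j : ℕ) * xinv p n ^ (k : ℕ) = xinv p n ^ ((k : ℕ) - j) := by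
      calc xx p n ^ (j : ℕ) * xinv p n ^ (k : ℕ)
          = xinv p n ^ ((k : ℕ) - j) * (xx p n ^ (j : ℕ) * xinv p n ^ (j : ℕ)) := by
            rw [show xinv p n ^ (k : ℕ) = xinv p n ^ ((k : ℕ) - j) * xinv p n ^ (j : ℕ) by
              rw [← pow_add, Nat.sub_add_cancel h.le]]
            ring
        _ = xinv p n ^ ((k : ℕ) - j) := by rw [x_pow_mul_xinv_pow p n hn, mul_one]
    have hmn : (k : ℕ) - j < n := lt_of_le_of_lt (Nat.sub_le _ _) k.isLt
    rw [h2, xinv_pow_eq p n hn _ (Nat.sub_pos_of_lt h) hmn, map_neg,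
      eps_x_pow p n hn _ (Nat.sub_lt_of_pos_le (by omega) (by omega))]
    rw [if_neg (by omega : ¬ (n - ((k:ℕ) - j) = 0)), if_neg (by omega : ¬ ((j:ℕ) = k)), neg_zero]

theorem aeval_xinv_qp (hn : 0 < n) : aeval (xinv p n) (qp p n) = 0 := by
  have : aeval (xinv p n) (qp p n) = xinv p n ^ n + 1 := by
    simp [qp]
  rw [this, xinv_pow_n p n hn, neg_add_cancel]

noncomputable def psi (hn : 0 < n) : Rpn p n →+* Rpn p n :=
  Ideal.Quotient.lift (Ideal.span {(X : Polynomial (ZMod p)) ^ n + 1})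
    (aeval (xinv p n)).toRingHom
    (by
      intro a ha
      rw [Ideal.mem_span_singleton] at ha
      obtain ⟨c, rfl⟩ := ha
      show aeval (xinv p n) ((X ^ n + 1 : Polynomial (ZMod p)) * c) = 0
      rw [map_mul]
      have h0 : (aeval (xinv p n)) ((X : Polynomial (ZMod p)) ^ n + 1) = 0 :=
        aeval_xinv_qp p n hn
      rw [h0, zero_mul])

theorem psi_mk (hn : 0 < n) (P : Polynomial (ZMod p)) :
    psi p n hn (mkR p n P) = aeval (xinv p n) P := rfl

theorem neg_xinv_pow_pred (hn : 0 < n) : -(xinv p n ^ (n - 1)) = xx p n := by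
  have h2 : xx p n * xx p n ^ (n - 1) = xx p n ^ n := by
    rw [← pow_succ', Nat.sub_add_cancel hn]
  calc -(xinv p n ^ (n - 1)) = (-1) * xinv p n ^ (n - 1) := by ring
    _ = xx p n ^ n * xinv p n ^ (n - 1) := by rw [x_pow_n p n hn]
    _ = xx p n * (xx p n ^ (n - 1) * xinv p n ^ (n - 1)) := by rw [← h2]; ring
    _ = xx p n := by rw [x_pow_mul_xinv_pow p n hn, mul_one]

theorem psi_surjective (hn : 0 < n) : Function.Surjective (psi p n hn) := by
  intro s
  obtain ⟨P, hP⟩ := Ideal.Quotient.mk_surjective s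
  refine ⟨mkR p n (aeval (-(X : Polynomial (ZMod p)) ^ (n - 1)) P), ?_⟩
  rw [psi_mk]
  have key : aeval (xinv p n) (aeval (-(X : Polynomial (ZMod p)) ^ (n - 1)) P)
      = aeval (aeval (xinv p n) (-(X : Polynomial (ZMod p)) ^ (n - 1))) P :=
    (aeval_algHom_apply (aeval (xinv p n)) _ P).symm
  rw [key]
  have h1 : aeval (xinv p n) (-(X : Polynomial (ZMod p)) ^ (n - 1)) = xx p n := by
    rw [map_neg, map_pow, aeval_X]
    exact neg_xinv_pow_pred p n hn
  rw [h1]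
  show aeval (AdjoinRoot.root (qp p n)) P = s
  rw [AdjoinRoot.aeval_eq]
  exact hP

theorem mkR_C (c : ZMod p) : mkR p n (C c) = algebraMap (ZMod p) (Rpn p n) c := rfl

theorem toR_eq (a : Fin n → ZMod p) :
    toR p n a = ∑ j : Fin n, algebraMap (ZMod p) (Rpn p n) (a j) * xx p n ^ (j : ℕ) := by
  unfold toR toPoly
  rw [map_sum]
  refine Finset.sum_congr rfl fun j _ => ?_
  rw [map_mul, map_pow, mkR_C]
  rfl

theorem psi_toR (hn : 0 < n) (c : Fin n → ZMod p) :
    psi p n hn (toR p n c)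
      = ∑ k : Fin n, algebraMap (ZMod p) (Rpn p n) (c k) * xinv p n ^ (k : ℕ) := by
  unfold toR toPoly
  rw [psi_mk, map_sum]
  refine Finset.sum_congr rfl fun k _ => ?_
  rw [map_mul, map_pow, aeval_C, aeval_X]

theorem eps_mk' (hn : 0 < n) (P : Polynomial (ZMod p)) :
    eps p n hn (mkR p n P) = (P %ₘ qp p n).coeff 0 := rfl

theorem eps_C_mul (hn : 0 < n) (c : ZMod p) (t : Rpn p n) :
    eps p n hn (mkR p n (C c) * t) = c * eps p n hn t := by
  obtain ⟨Q, hQ⟩ := Ideal.Quotient.mk_surjective t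
  have hQ' : mkR p n Q = t := hQ
  rw [← hQ', ← map_mul, eps_mk' p n hn, eps_mk' p n hn, ← smul_eq_C_mul,
    smul_modByMonic, coeff_smul, smul_eq_mul]

/-- Key bilinear computation. -/
theorem eps_toR_psi (hn : 0 < n) (a c : Fin n → ZMod p) :
    eps p n hn (toR p n a * psi p n hn (toR p n c)) = ∑ j, a j * c j := by
  rw [toR_eq, psi_toR, Finset.sum_mul_sum]
  rw [map_sum]
  have hterm : ∀ j k : Fin n,
      eps p n hn (algebraMap (ZMod p) (Rpn p n) (a j) * xx p n ^ (j : ℕ) *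
        (algebraMap (ZMod p) (Rpn p n) (c k) * xinv p n ^ (k : ℕ)))
      = a j * c k * (if (j : ℕ) = (k : ℕ) then 1 else 0) := by
    intro j k
    have h1 : algebraMap (ZMod p) (Rpn p n) (a j) * xx p n ^ (j : ℕ) *
        (algebraMap (ZMod p) (Rpn p n) (c k) * xinv p n ^ (k : ℕ))
        = mkR p n (C (a j)) * (mkR p n (C (c k)) * (xx p n ^ (j : ℕ) * xinv p n ^ (k : ℕ))) := by
      rw [mkR_C, mkR_C]; ring
    rw [h1, eps_C_mul p n hn, eps_C_mul p n hn, eps_x_xinv p n hn, mul_assoc]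
  calc ∑ j : Fin n, eps p n hn (∑ k : Fin n,
        algebraMap (ZMod p) (Rpn p n) (a j) * xx p n ^ (j : ℕ) *
          (algebraMap (ZMod p) (Rpn p n) (c k) * xinv p n ^ (k : ℕ)))
      = ∑ j : Fin n, ∑ k : Fin n, a j * c k * (if (j : ℕ) = (k : ℕ) then 1 else 0) := by
        refine Finset.sum_congr rfl fun j _ => ?_
        rw [map_sum]
        exact Finset.sum_congr rfl fun k _ => hterm j k
    _ = ∑ j, a j * c j := by
        refine Finset.sum_congr rfl fun j _ => ?_
        rw [Finset.sum_eq_single j]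
        · rw [if_pos rfl, mul_one]
        · intro k _ hk
          rw [if_neg (by simpa [Fin.val_inj] using (Ne.symm hk)), mul_zero]
        · intro h; exact absurd (Finset.mem_univ j) h

theorem sympForm_eq (hn : 0 < n) (u v : (Fin n → ZMod p) × (Fin n → ZMod p)) :
    sympForm p n u v
      = eps p n hn (toR p n u.1 * psi p n hn (toR p n v.2)
          - toR p n u.2 * psi p n hn (toR p n v.1)) := by
  rw [map_sub, eps_toR_psi p n hn, eps_toR_psi p n hn]
  rfl

theorem toR_surjective (hn : 0 < n) : Function.Surjective (toR p n) := by
  intro r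
  obtain ⟨P, hP⟩ := Ideal.Quotient.mk_surjective r
  set P' := P %ₘ qp p n with hP'
  have hdeg : P'.degree < n := by
    rw [← qp_degree p n hn]
    exact degree_modByMonic_lt P (qp_monic p n hn)
  have hnat : P'.natDegree < n := by
    by_cases h0 : P' = 0
    · simpa [h0] using hn
    · exact (Polynomial.natDegree_lt_iff_degree_lt h0).2 (by exact_mod_cast hdeg)
  refine ⟨fun j => P'.coeff j, ?_⟩
  have htp : toPoly p n (fun j => P'.coeff j) = P' := by
    unfold toPoly
    rw [Fin.sum_univ_eq_sum_range (fun j => C (P'.coeff j) * X ^ j)]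
    simp only [C_mul_X_pow_eq_monomial]
    exact (P'.as_sum_range' n hnat).symm
  unfold toR
  rw [htp]
  have hsplit : P' + qp p n * (P /ₘ qp p n) = P := modByMonic_add_div P (qp p n)
  have : mkR p n P' + mkR p n (qp p n) * mkR p n (P /ₘ qp p n) = mkR p n P := by
    rw [← map_mul, ← map_add, hsplit]
  rw [mkR_qp, zero_mul, add_zero] at this
  exact this.trans hP

theorem eps_nondeg (hn : 0 < n) (h : Rpn p n)
    (H : ∀ r : Rpn p n, eps p n hn (h * r) = 0) : h = 0 := by
  obtain ⟨e, he⟩ := toR_surjective p n hn h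
  have hek : ∀ k : Fin n, e k = 0 := by
    intro k
    have := H (psi p n hn (toR p n (Pi.single k 1)))
    rw [← he, eps_toR_psi p n hn] at this
    rw [Finset.sum_eq_single k (fun j _ hj => by simp [Pi.single_apply, hj]) 
      (fun h => absurd (Finset.mem_univ k) h)] at this
    simpa using this
  rw [← he, toR_eq]
  refine Finset.sum_eq_zero fun j _ => ?_
  rw [hek j, map_zero, zero_mul]

end Stmt5Aux

open Stmt5Aux in
/-- for `S = {(a·g, a·f) : a ∈ R}` (regarded inside `F_p^n × F_p^n`):
(1) `S` is totally isotropic iff `g(x)f(x⁻¹) = f(x)g(x⁻¹)` in `R`;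
(2) `(a,b) ∈ S^⊥` iff `a(x)f(x⁻¹) = b(x)g(x⁻¹)` in `R`. -/
theorem stmt5 (p n : ℕ) [Fact p.Prime] (hp : Odd p) (hn : 0 < n)
    (g f : Polynomial (ZMod p))
    (S : Set ((Fin n → ZMod p) × (Fin n → ZMod p)))
    (hS : S = {ab | ∃ a : Rpn p n,
        toR p n ab.1 = a * mkR p n g ∧ toR p n ab.2 = a * mkR p n f}) :
    ((∀ u ∈ S, ∀ v ∈ S, sympForm p n u v = 0) ↔
      mkR p n g * aeval (xinv p n) f = mkR p n f * aeval (xinv p n) g) ∧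
    (∀ ab : (Fin n → ZMod p) × (Fin n → ZMod p),
      (∀ v ∈ S, sympForm p n ab v = 0) ↔
        toR p n ab.1 * aeval (xinv p n) f = toR p n ab.2 * aeval (xinv p n) g) := by
  subst hS
  have key : ∀ (u v : (Fin n → ZMod p) × (Fin n → ZMod p)) (d : Rpn p n),
      toR p n v.1 = d * mkR p n g → toR p n v.2 = d * mkR p n f →
      sympForm p n u v = eps p n hn
        ((toR p n u.1 * aeval (xinv p n) f - toR p n u.2 * aeval (xinv p n) g)
          * psi p n hn d) := by
    intro u v d h1 h2
    rw [sympForm_eq p n hn, h1, h2, map_mul, map_mul, psi_mk, psi_mk]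
    congr 1
    ring
  constructor
  · constructor
    · intro H
      have h0 : mkR p n g * aeval (xinv p n) f - mkR p n f * aeval (xinv p n) g = 0 := by
        apply eps_nondeg p n hn
        intro r
        obtain ⟨d, hd⟩ := psi_surjective p n hn r
        obtain ⟨u1, hu1⟩ := toR_surjective p n hn ((1 : Rpn p n) * mkR p n g)
        obtain ⟨u2, hu2⟩ := toR_surjective p n hn ((1 : Rpn p n) * mkR p n f)
        obtain ⟨v1, hv1⟩ := toR_surjective p n hn (d * mkR p n g)
        obtain ⟨v2, hv2⟩ := toR_surjective p n hn (d * mkR p n f)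
        have hsym := H (u1, u2) ⟨1, hu1, hu2⟩ (v1, v2) ⟨d, hv1, hv2⟩
        rw [key (u1, u2) (v1, v2) d hv1 hv2] at hsym
        simp only at hsym
        rw [hu1, hu2, one_mul, one_mul] at hsym
        rw [← hd]
        exact hsym
      linear_combination h0
    · intro hEq u hu v hv
      obtain ⟨c, hc1, hc2⟩ := hu
      obtain ⟨d, hd1, hd2⟩ := hv
      rw [key u v d hd1 hd2, hc1, hc2]
      have h0 : c * mkR p n g * aeval (xinv p n) f - c * mkR p n f * aeval (xinv p n) g
          = 0 := by linear_combination c * hEq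
      rw [h0, zero_mul, map_zero]
  · intro ab
    constructor
    · intro H
      have h0 : toR p n ab.1 * aeval (xinv p n) f - toR p n ab.2 * aeval (xinv p n) g
          = 0 := by
        apply eps_nondeg p n hn
        intro r
        obtain ⟨d, hd⟩ := psi_surjective p n hn r
        obtain ⟨v1, hv1⟩ := toR_surjective p n hn (d * mkR p n g)
        obtain ⟨v2, hv2⟩ := toR_surjective p n hn (d * mkR p n f)
        have hsym := H (v1, v2) ⟨d, hv1, hv2⟩
        rw [key ab (v1, v2) d hv1 hv2] at hsym
        rw [← hd]
        exact hsym
      linear_combination h0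
    · intro hEq v hv
      obtain ⟨d, hd1, hd2⟩ := hv
      rw [key ab v d hd1 hd2]
      have h0 : toR p n ab.1 * aeval (xinv p n) f - toR p n ab.2 * aeval (xinv p n) g
          = 0 := by linear_combination hEq
      rw [h0, zero_mul, map_zero]
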